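/- arXiv:1902.05501 — 2 statements merged into one kernel-verified Lean document; each statement's English description precedes it below -/
import Mathlib

section
/- For q ∈ ℕ, |z| > 0, r̄ > 0, R = sqrt(r²+z²), R̄ = sqrt(r̄²+z²): ∫_0^r̄ (R − |z|)^q (r²/R) dr = r̄(R̄ − |z|)^{q+1}/(q+2) + (2|z|/(q+2))·∫_{sqrt(2|z|)}^{sqrt(R̄+|z|)} (t² − 2|z|)^{q+1/2} dt. -/
/-- for `q ∈ ℕ`, `|z| > 0`, `r̄ > 0`, `R = sqrt(r²+z²)`, `R̄ = sqrt(r̄²+z²)`: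
`∫_0^r̄ (R - |z|)^q (r²/R) dr = r̄ (R̄ - |z|)^{q+1}/(q+2)
  + (2|z|/(q+2)) ∫_{sqrt(2|z|)}^{sqrt(R̄+|z|)} (t² - 2|z|)^{q+1/2} dt`. -/
theorem stmt9 (q : ℕ) (z rbar : ℝ) (hz : 0 < |z|) (hrbar : 0 < rbar) :
    ∫ r in (0 : ℝ)..rbar,
        (Real.sqrt (r ^ 2 + z ^ 2) - |z|) ^ q *
          (r ^ 2 / Real.sqrt (r ^ 2 + z ^ 2)) =
      rbar * (Real.sqrt (rbar ^ 2 + z ^ 2) - |z|) ^ (q + 1) / ((q : ℝ) + 2) +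
        (2 * |z| / ((q : ℝ) + 2)) *
          ∫ t in Real.sqrt (2 * |z|)..Real.sqrt (Real.sqrt (rbar ^ 2 + z ^ 2) + |z|),
            (t ^ 2 - 2 * |z|) ^ ((q : ℝ) + 1 / 2) := by
  have hz0 : z ≠ 0 := by
    intro h; rw [h, abs_zero] at hz; exact lt_irrefl 0 hz
  set A : ℝ := |z| with hAdef
  have hA : 0 < A := hz
  set R : ℝ → ℝ := fun r => Real.sqrt (r ^ 2 + z ^ 2) with hRdef
  set h : ℝ → ℝ := fun r => Real.sqrt (R r + A) with hhdef
  -- basic facts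
  have hsum : ∀ r : ℝ, 0 < r ^ 2 + z ^ 2 := fun r => by positivity
  have hRpos : ∀ r : ℝ, 0 < R r := fun r => Real.sqrt_pos.2 (hsum r)
  have hRsq : ∀ r : ℝ, (R r) ^ 2 = r ^ 2 + z ^ 2 := fun r =>
    Real.sq_sqrt (hsum r).le
  have hRge : ∀ r : ℝ, A ≤ R r := by
    intro r
    have : Real.sqrt (z ^ 2) ≤ Real.sqrt (r ^ 2 + z ^ 2) :=
      Real.sqrt_le_sqrt (by nlinarith [sq_nonneg r])
    simpa [Real.sqrt_sq_eq_abs] using this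
  have hhpos : ∀ r : ℝ, 0 < h r := fun r =>
    Real.sqrt_pos.2 (by have := hRpos r; have := hA; linarith)
  have hhsq : ∀ r : ℝ, (h r) ^ 2 = R r + A := fun r =>
    Real.sq_sqrt (by have := hRpos r; linarith [hA.le])
  -- derivative of h
  have hderiv : ∀ r : ℝ, HasDerivAt h (r / (2 * h r * R r)) r := by
    intro r
    have d1 : HasDerivAt (fun x : ℝ => x ^ 2 + z ^ 2) (2 * r) r := by
      simpa using (hasDerivAt_pow 2 r).add_const (z ^ 2)
    have d2 : HasDerivAt R (1 / (2 * R r) * (2 * r)) r :=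
      (Real.hasDerivAt_sqrt (hsum r).ne').comp r d1
    have d3 : HasDerivAt (fun x => R x + A) (1 / (2 * R r) * (2 * r)) r :=
      d2.add_const A
    have d4 : HasDerivAt h (1 / (2 * h r) * (1 / (2 * R r) * (2 * r))) r :=
      (Real.hasDerivAt_sqrt (by have := hRpos r; have := hA; linarith)).comp r d3
    convert d4 using 1
    have h1 := (hhpos r).ne'
    have h2 := (hRpos r).ne'
    field_simp
  -- rpow splitting lemma
  have hsplit : ∀ s : ℝ, 0 ≤ s → s ^ ((q : ℝ) + 1 / 2) = s ^ q * Real.sqrt s := by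
    intro s hs
    rw [Real.rpow_add' hs (by positivity), Real.rpow_natCast, Real.sqrt_eq_rpow]
  have hsplit3 : ∀ s : ℝ, 0 ≤ s →
      s ^ ((q : ℝ) + 3 / 2) = s ^ (q + 1) * Real.sqrt s := by
    intro s hs
    have : ((q : ℝ) + 3 / 2) = ((q : ℝ) + 1) + 1 / 2 := by ring
    rw [this, Real.rpow_add' hs (by positivity), Real.sqrt_eq_rpow]
    have : ((q : ℝ) + 1) = ((q + 1 : ℕ) : ℝ) := by push_cast; ring
    rw [this, Real.rpow_natCast]
  -- substitution: LHS = ∫ t in h 0 .. h rbar, 2 t^2 (t^2-2A)^(q+1/2)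
  set g : ℝ → ℝ := fun t => 2 * t ^ 2 * (t ^ 2 - 2 * A) ^ ((q : ℝ) + 1 / 2)
    with hgdef
  have hrpow_cont : Continuous fun x : ℝ => x ^ ((q : ℝ) + 1 / 2) := by
    rw [continuous_iff_continuousAt]
    intro x
    exact Real.continuousAt_rpow_const x _ (Or.inr (by positivity))
  have hgcont : Continuous g := by
    apply Continuous.mul
    · fun_prop
    · exact hrpow_cont.comp (by fun_prop)
  have hRcont : Continuous R := by
    apply Real.continuous_sqrt.comp; fun_prop
  have hhcont : Continuous h := by
    apply Real.continuous_sqrt.comp; exact hRcont.add continuous_const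
  have hderivcont : Continuous fun r => r / (2 * h r * R r) := by
    apply Continuous.div continuous_id
    · exact (continuous_const.mul hhcont).mul hRcont
    · intro x
      have := (hhpos x).ne'
      have := (hRpos x).ne'
      positivity
  have subst :
      (∫ r in (0 : ℝ)..rbar, (R r - A) ^ q * (r ^ 2 / R r)) =
        ∫ t in (h 0)..(h rbar), g t := by
    rw [← intervalIntegral.integral_comp_smul_deriv
        (fun x _ => hderiv x) hderivcont.continuousOn hgcont]
    apply intervalIntegral.integral_congr
    intro x hx
    have hx0 : 0 ≤ x := by
      rcases Set.mem_uIcc.1 hx with h' | h' <;> [exact h'.1; linarith [h'.1, h'.2]]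
    have hs : 0 ≤ R x - A := by linarith [hRge x]
    have key : Real.sqrt (R x - A) * h x = x := by
      rw [hhdef]
      rw [← Real.sqrt_mul hs]
      have : (R x - A) * (R x + A) = x ^ 2 := by
        have := hRsq x
        have hA2 : A ^ 2 = z ^ 2 := sq_abs z
        nlinarith
      rw [this, Real.sqrt_sq hx0]
    simp only [smul_eq_mul, Function.comp_apply, hgdef]
    rw [hhsq x, show R x + A - 2 * A = R x - A by ring, hsplit _ hs]
    have h1 := (hhpos x).ne'
    have h2 := (hRpos x).ne'
    field_simp
    linear_combination (-(x * h x * (R x - A) ^ q)) * key +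
      (x * Real.sqrt (R x - A) * (R x - A) ^ q) * hhsq x
  -- endpoints
  have hh0 : h 0 = Real.sqrt (2 * A) := by
    have hR0 : R 0 = A := by
      rw [hRdef]; simp [Real.sqrt_sq_eq_abs, hAdef]
    show Real.sqrt (R 0 + A) = Real.sqrt (2 * A)
    rw [hR0, two_mul]
  set Rb : ℝ := Real.sqrt (rbar ^ 2 + z ^ 2) with hRb
  have hRbR : Rb = R rbar := rfl
  have hRb2 : Rb ^ 2 = rbar ^ 2 + z ^ 2 := Real.sq_sqrt (hsum rbar).le
  set t0 : ℝ := Real.sqrt (2 * A) with ht0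
  set t1 : ℝ := Real.sqrt (Rb + A) with ht1
  have ht1h : t1 = h rbar := by
    rw [ht1, hRbR]
  have hRbge : A ≤ Rb := by rw [hRbR]; exact hRge rbar
  have hRbpos : 0 < Rb := by rw [hRbR]; exact hRpos rbar
  have ht0nn : 0 ≤ t0 := Real.sqrt_nonneg _
  have ht0le : t0 ≤ t1 := Real.sqrt_le_sqrt (by linarith)
  have ht0sq : t0 ^ 2 = 2 * A := Real.sq_sqrt (by linarith)
  have ht1sq : t1 ^ 2 = Rb + A := Real.sq_sqrt (by linarith)
  have hA2 : A ^ 2 = z ^ 2 := sq_abs z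
  have key1 : Real.sqrt (Rb - A) * t1 = rbar := by
    have hs : 0 ≤ Rb - A := by linarith
    rw [ht1, ← Real.sqrt_mul hs]
    have e : (Rb - A) * (Rb + A) = rbar ^ 2 := by linear_combination hRb2 - hA2
    rw [e, Real.sqrt_sq hrbar.le]
  -- rewrite the goal using the substitution
  have hgoalL : (∫ r in (0:ℝ)..rbar, (Real.sqrt (r ^ 2 + z ^ 2) - A) ^ q *
      (r ^ 2 / Real.sqrt (r ^ 2 + z ^ 2))) = ∫ t in t0..t1, g t := by
    rw [← hh0, ht1h]
    exact subst
  clear_value Rb t1 t0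
  clear subst hh0 hRbR ht1h hderiv hderivcont hhcont hRcont hRb ht1 ht0
  set p : ℝ := (q : ℝ) + 3 / 2 with hp
  have hp1 : 1 ≤ p := by
    have : (0 : ℝ) ≤ (q : ℝ) := Nat.cast_nonneg q
    rw [hp]; linarith
  set F : ℝ → ℝ := fun t => t * (t ^ 2 - 2 * A) ^ p with hF
  have hw : ∀ t ∈ Set.uIcc t0 t1, 0 ≤ t ^ 2 - 2 * A := by
    intro t ht
    rw [Set.uIcc_of_le ht0le] at ht
    have h1 : t0 ≤ t := ht.1
    have : t0 ^ 2 ≤ t ^ 2 := by nlinarith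
    linarith [ht0sq]
  have hFderiv : ∀ t : ℝ, HasDerivAt F
      ((t ^ 2 - 2 * A) ^ p + t * (p * (t ^ 2 - 2 * A) ^ (p - 1) * (2 * t))) t := by
    intro t
    have d1 : HasDerivAt (fun t : ℝ => t ^ 2 - 2 * A) (2 * t) t := by
      simpa using (hasDerivAt_pow 2 t).sub_const (2 * A)
    have d2 : HasDerivAt (fun t : ℝ => (t ^ 2 - 2 * A) ^ p)
        (p * (t ^ 2 - 2 * A) ^ (p - 1) * (2 * t)) t :=
      (Real.hasDerivAt_rpow_const (Or.inr hp1)).comp t d1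
    exact ((hasDerivAt_id' t).mul d2).congr_deriv (by ring)
  have hcw : Continuous (fun t : ℝ => (t ^ 2 - 2 * A) ^ ((q : ℝ) + 1 / 2)) :=
    hrpow_cont.comp (by fun_prop)
  have i1 : IntervalIntegrable
      (fun t : ℝ => t ^ 2 * (t ^ 2 - 2 * A) ^ ((q : ℝ) + 1 / 2))
      MeasureTheory.volume t0 t1 :=
    ((continuous_pow 2).mul hcw).intervalIntegrable _ _
  have i2 : IntervalIntegrable (fun t : ℝ => (t ^ 2 - 2 * A) ^ ((q : ℝ) + 1 / 2))
      MeasureTheory.volume t0 t1 := hcw.intervalIntegrable _ _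
  have hFTC : ∫ t in t0..t1,
      ((2 * (q : ℝ) + 4) * t ^ 2 - 2 * A) * (t ^ 2 - 2 * A) ^ ((q : ℝ) + 1 / 2)
      = F t1 - F t0 := by
    apply intervalIntegral.integral_eq_sub_of_hasDerivAt
    · intro t ht
      have h1 : 0 ≤ t ^ 2 - 2 * A := hw t ht
      refine (hFderiv t).congr_deriv ?_
      have e1 : (t ^ 2 - 2 * A) ^ p
          = (t ^ 2 - 2 * A) * (t ^ 2 - 2 * A) ^ ((q : ℝ) + 1 / 2) := by
        rw [hp, show (q : ℝ) + 3 / 2 = 1 + ((q : ℝ) + 1 / 2) by ring,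
          Real.rpow_add' h1 (by positivity), Real.rpow_one]
      have e2 : p - 1 = (q : ℝ) + 1 / 2 := by rw [hp]; ring
      rw [e1, e2]; ring
    · apply Continuous.intervalIntegrable
      exact (by fun_prop : Continuous fun t : ℝ => (2 * (q : ℝ) + 4) * t ^ 2 - 2 * A).mul hcw
  have hsplitInt : ∫ t in t0..t1,
      ((2 * (q : ℝ) + 4) * t ^ 2 - 2 * A) * (t ^ 2 - 2 * A) ^ ((q : ℝ) + 1 / 2)
      = (2 * (q : ℝ) + 4) * (∫ t in t0..t1, t ^ 2 * (t ^ 2 - 2 * A) ^ ((q : ℝ) + 1 / 2))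
        - 2 * A * ∫ t in t0..t1, (t ^ 2 - 2 * A) ^ ((q : ℝ) + 1 / 2) := by
    rw [← intervalIntegral.integral_const_mul, ← intervalIntegral.integral_const_mul,
      ← intervalIntegral.integral_sub (i1.const_mul _) (i2.const_mul _)]
    apply intervalIntegral.integral_congr
    intro t _
    ring
  have hFt0 : F t0 = 0 := by
    rw [hF]
    simp only
    rw [ht0sq, sub_self, Real.zero_rpow (by rw [hp]; positivity)]
    ring
  have hFt1 : F t1 = rbar * (Rb - A) ^ (q + 1) := by
    have hs : 0 ≤ Rb - A := by linarith
    rw [hF]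
    simp only
    rw [ht1sq, show Rb + A - 2 * A = Rb - A by ring, hp, hsplit3 _ hs]
    rw [← key1]
    ring
  have hIg : (∫ t in t0..t1, g t)
      = 2 * ∫ t in t0..t1, t ^ 2 * (t ^ 2 - 2 * A) ^ ((q : ℝ) + 1 / 2) := by
    rw [← intervalIntegral.integral_const_mul]
    apply intervalIntegral.integral_congr
    intro t _
    rw [hgdef]
    ring
  have hq2 : ((q : ℝ) + 2) ≠ 0 := by positivity
  rw [hgoalL, hIg]
  have hmain : (2 * (q : ℝ) + 4) * (∫ t in t0..t1, t ^ 2 * (t ^ 2 - 2 * A) ^ ((q : ℝ) + 1 / 2))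
      - 2 * A * (∫ t in t0..t1, (t ^ 2 - 2 * A) ^ ((q : ℝ) + 1 / 2))
      = rbar * (Rb - A) ^ (q + 1) := by
    rw [← hsplitInt, hFTC, hFt0, hFt1, sub_zero]
  set I2 := ∫ t in t0..t1, t ^ 2 * (t ^ 2 - 2 * A) ^ ((q : ℝ) + 1 / 2) with hI2
  set J := ∫ t in t0..t1, (t ^ 2 - 2 * A) ^ ((q : ℝ) + 1 / 2) with hJ
  clear_value I2 J
  field_simp
  linear_combination hmain
end

section
/- For 0 < α < 1, α' = sqrt(1−α²), Δ(θ) = sqrt(1−α²sin²θ): the function L_c(θ) = sin θ·log((Δ−α')/(Δ+α')) + log((Δ+α' sin θ)/(Δ−α' sin θ)) − 2(α'/α)·arcsin(α sin θ) is an antiderivative of θ ↦ cos θ·log((Δ−α')/(Δ+α')) on (0, π/2). -/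
set_option maxHeartbeats 1600000


/-- for `0 < α < 1`, `α' = sqrt(1-α²)`, `Δ(θ) = sqrt(1-α² sin²θ)`, the
function `L_c(θ) = sin θ log((Δ-α')/(Δ+α')) + log((Δ+α' sin θ)/(Δ-α' sin θ))
 - 2(α'/α) arcsin(α sin θ)` is an antiderivative of `θ ↦ cos θ log((Δ-α')/(Δ+α'))`
on `(0, π/2)`. -/
theorem stmt18 (α : ℝ) (hα : 0 < α) (hα1 : α < 1) :
    ∀ θ ∈ Set.Ioo (0 : ℝ) (Real.pi / 2),
      HasDerivAt
        (fun θ : ℝ =>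
          Real.sin θ *
              Real.log ((Real.sqrt (1 - α ^ 2 * Real.sin θ ^ 2) - Real.sqrt (1 - α ^ 2)) /
                (Real.sqrt (1 - α ^ 2 * Real.sin θ ^ 2) + Real.sqrt (1 - α ^ 2))) +
            Real.log ((Real.sqrt (1 - α ^ 2 * Real.sin θ ^ 2) +
                Real.sqrt (1 - α ^ 2) * Real.sin θ) /
              (Real.sqrt (1 - α ^ 2 * Real.sin θ ^ 2) -
                Real.sqrt (1 - α ^ 2) * Real.sin θ)) -
            2 * (Real.sqrt (1 - α ^ 2) / α) * Real.arcsin (α * Real.sin θ))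
        (Real.cos θ *
          Real.log ((Real.sqrt (1 - α ^ 2 * Real.sin θ ^ 2) - Real.sqrt (1 - α ^ 2)) /
            (Real.sqrt (1 - α ^ 2 * Real.sin θ ^ 2) + Real.sqrt (1 - α ^ 2)))) θ := by
  have hπ := Real.pi_pos
  have hα2 : α ^ 2 < 1 := by nlinarith
  -- facts valid on the whole interval
  have key : ∀ t ∈ Set.Ioo (0 : ℝ) (Real.pi / 2),
      0 < Real.sin t ∧ Real.sin t < 1 ∧ 0 < Real.cos t ∧
        Real.sqrt (1 - α ^ 2) < Real.sqrt (1 - α ^ 2 * Real.sin t ^ 2) ∧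
        Real.sqrt (1 - α ^ 2) * Real.sin t < Real.sqrt (1 - α ^ 2 * Real.sin t ^ 2) := by
    intro t ht
    obtain ⟨ht0, htπ⟩ := ht
    have hs0 : 0 < Real.sin t := Real.sin_pos_of_pos_of_lt_pi ht0 (by linarith)
    have hc0 : 0 < Real.cos t := Real.cos_pos_of_mem_Ioo ⟨by linarith, htπ⟩
    have hpyth := Real.sin_sq_add_cos_sq t
    have hs1 : Real.sin t < 1 := by nlinarith
    have hβΔ : Real.sqrt (1 - α ^ 2) < Real.sqrt (1 - α ^ 2 * Real.sin t ^ 2) :=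
      Real.sqrt_lt_sqrt (by nlinarith) (by nlinarith [mul_pos (mul_pos hα hα) (mul_pos hc0 hc0)])
    have hβ0 : 0 < Real.sqrt (1 - α ^ 2) := Real.sqrt_pos.2 (by nlinarith)
    refine ⟨hs0, hs1, hc0, hβΔ, ?_⟩
    calc Real.sqrt (1 - α ^ 2) * Real.sin t < Real.sqrt (1 - α ^ 2) := by nlinarith
      _ < _ := hβΔ
  intro θ hθ
  obtain ⟨hθ0, hθπ⟩ := hθ
  obtain ⟨hs0, hs1, hc0, hβΔ, hβsΔ⟩ := key θ ⟨hθ0, hθπ⟩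
  set s := Real.sin θ with hsdef
  set c := Real.cos θ with hcdef
  set β := Real.sqrt (1 - α ^ 2) with hβdef
  set Δ := Real.sqrt (1 - α ^ 2 * s ^ 2) with hΔdef
  have hβ0 : 0 < β := Real.sqrt_pos.2 (by nlinarith)
  have hβsq : β ^ 2 = 1 - α ^ 2 := Real.sq_sqrt (by nlinarith)
  have hΔ0 : 0 < Δ := lt_trans hβ0 hβΔ
  have hΔsq : Δ ^ 2 = 1 - α ^ 2 * s ^ 2 := Real.sq_sqrt (by nlinarith)
  have hpyth : s ^ 2 + c ^ 2 = 1 := Real.sin_sq_add_cos_sq θ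
  have hne1 : Δ - β ≠ 0 := ne_of_gt (by linarith)
  have hne2 : Δ + β ≠ 0 := ne_of_gt (by linarith)
  have hne3 : Δ + β * s ≠ 0 := ne_of_gt (by nlinarith)
  have hne4 : Δ - β * s ≠ 0 := ne_of_gt (by linarith)
  have hΔne : Δ ≠ 0 := ne_of_gt hΔ0
  have hcne : c ≠ 0 := ne_of_gt hc0
  have hαne : α ≠ 0 := ne_of_gt hα
  -- derivative of Δ
  have hΔ' : HasDerivAt (fun t => Real.sqrt (1 - α ^ 2 * Real.sin t ^ 2))
      (-(α ^ 2 * s * c) / Δ) θ := by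
    have h1 : HasDerivAt (fun t : ℝ => 1 - α ^ 2 * Real.sin t ^ 2)
        (-(α ^ 2 * (↑(2 : ℕ) * Real.sin θ ^ (2 - 1) * Real.cos θ))) θ :=
      (((Real.hasDerivAt_sin θ).pow 2).const_mul (α ^ 2)).const_sub 1
    have h2 := h1.sqrt (by nlinarith : (1 : ℝ) - α ^ 2 * Real.sin θ ^ 2 ≠ 0)
    convert h2 using 1
    rw [← hsdef, ← hcdef, ← hΔdef]
    field_simp
    ring
  -- the split-log version of the function
  have hL1 : HasDerivAt (fun t => Real.log (Real.sqrt (1 - α ^ 2 * Real.sin t ^ 2) - β))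
      ((-(α ^ 2 * s * c) / Δ) / (Δ - β)) θ := (hΔ'.sub_const β).log hne1
  have hL2 : HasDerivAt (fun t => Real.log (Real.sqrt (1 - α ^ 2 * Real.sin t ^ 2) + β))
      ((-(α ^ 2 * s * c) / Δ) / (Δ + β)) θ := (hΔ'.add_const β).log hne2
  have hT1 : HasDerivAt (fun t => Real.sin t *
      (Real.log (Real.sqrt (1 - α ^ 2 * Real.sin t ^ 2) - β) -
        Real.log (Real.sqrt (1 - α ^ 2 * Real.sin t ^ 2) + β)))
      (c * (Real.log (Δ - β) - Real.log (Δ + β)) +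
        s * ((-(α ^ 2 * s * c) / Δ) / (Δ - β) - (-(α ^ 2 * s * c) / Δ) / (Δ + β))) θ :=
    (Real.hasDerivAt_sin θ).mul (hL1.sub hL2)
  have hβsin : HasDerivAt (fun t => β * Real.sin t) (β * c) θ :=
    (Real.hasDerivAt_sin θ).const_mul β
  have hL3 : HasDerivAt
      (fun t => Real.log (Real.sqrt (1 - α ^ 2 * Real.sin t ^ 2) + β * Real.sin t))
      ((-(α ^ 2 * s * c) / Δ + β * c) / (Δ + β * s)) θ := (hΔ'.add hβsin).log hne3
  have hL4 : HasDerivAt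
      (fun t => Real.log (Real.sqrt (1 - α ^ 2 * Real.sin t ^ 2) - β * Real.sin t))
      ((-(α ^ 2 * s * c) / Δ - β * c) / (Δ - β * s)) θ := (hΔ'.sub hβsin).log hne4
  have hαs : HasDerivAt (fun t => α * Real.sin t) (α * c) θ :=
    (Real.hasDerivAt_sin θ).const_mul α
  have has1 : α * s ≠ 1 := by nlinarith
  have hasn1 : α * s ≠ -1 := by nlinarith
  have harc : HasDerivAt (fun t => Real.arcsin (α * Real.sin t))
      (1 / Real.sqrt (1 - (α * s) ^ 2) * (α * c)) θ :=
    HasDerivAt.comp (h₂ := Real.arcsin) θ (Real.hasDerivAt_arcsin hasn1 has1) hαs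
  have hAll := (hT1.add (hL3.sub hL4)).sub (harc.const_mul (2 * (β / α)))
  -- clean up the derivative value
  have hsqrtΔ : Real.sqrt (1 - (α * s) ^ 2) = Δ := by rw [mul_pow]
  have hprod : (Δ - β) * (Δ + β) = α ^ 2 * c ^ 2 := by
    linear_combination hΔsq - hβsq - α ^ 2 * hpyth
  have hprod2 : (Δ + β * s) * (Δ - β * s) = c ^ 2 := by
    linear_combination hΔsq - s ^ 2 * hβsq - hpyth
  have eA : s * ((-(α ^ 2 * s * c) / Δ) / (Δ - β) - (-(α ^ 2 * s * c) / Δ) / (Δ + β)) =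
      -(2 * β * s ^ 2) / (Δ * c) := by
    rw [div_sub_div _ _ hne1 hne2, hprod]
    field_simp
    ring
  have eB : (-(α ^ 2 * s * c) / Δ + β * c) / (Δ + β * s) -
      (-(α ^ 2 * s * c) / Δ - β * c) / (Δ - β * s) = 2 * β / (Δ * c) := by
    rw [div_sub_div _ _ hne3 hne4, hprod2]
    field_simp
    linear_combination (2 * β) * hΔsq
  have eC : 2 * (β / α) * (1 / Δ * (α * c)) = 2 * β * c / Δ := by
    field_simp
  have efin : -(2 * β * s ^ 2) / (Δ * c) + 2 * β / (Δ * c) - 2 * β * c / Δ = 0 := by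
    field_simp
    linear_combination (-2 * β) * hpyth
  have hG : HasDerivAt (fun t => Real.sin t *
      (Real.log (Real.sqrt (1 - α ^ 2 * Real.sin t ^ 2) - β) -
        Real.log (Real.sqrt (1 - α ^ 2 * Real.sin t ^ 2) + β)) +
      (Real.log (Real.sqrt (1 - α ^ 2 * Real.sin t ^ 2) + β * Real.sin t) -
        Real.log (Real.sqrt (1 - α ^ 2 * Real.sin t ^ 2) - β * Real.sin t)) -
      2 * (β / α) * Real.arcsin (α * Real.sin t))
      (c * (Real.log (Δ - β) - Real.log (Δ + β))) θ := by
    convert hAll using 1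
    · rfl
    · rfl
    · rfl
    rw [hsqrtΔ, eA, eB, eC]
    linarith [efin]
  have hlogdiv : Real.log ((Δ - β) / (Δ + β)) = Real.log (Δ - β) - Real.log (Δ + β) :=
    Real.log_div hne1 hne2
  rw [hlogdiv]
  refine hG.congr_of_eventuallyEq ?_
  filter_upwards [isOpen_Ioo.mem_nhds (⟨hθ0, hθπ⟩ : θ ∈ Set.Ioo (0 : ℝ) (Real.pi / 2))]
    with t ht
  obtain ⟨hs0', hs1', hc0', hβΔ', hβsΔ'⟩ := key t ht
  have h1 : Real.sqrt (1 - α ^ 2 * Real.sin t ^ 2) - β ≠ 0 := ne_of_gt (by linarith)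
  have h2 : Real.sqrt (1 - α ^ 2 * Real.sin t ^ 2) + β ≠ 0 := ne_of_gt (by linarith)
  have h3 : Real.sqrt (1 - α ^ 2 * Real.sin t ^ 2) + β * Real.sin t ≠ 0 :=
    ne_of_gt (by nlinarith)
  have h4 : Real.sqrt (1 - α ^ 2 * Real.sin t ^ 2) - β * Real.sin t ≠ 0 :=
    ne_of_gt (by linarith)
  rw [Real.log_div h1 h2, Real.log_div h3 h4]
end
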